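/- Let E be a compact metric space and (π_j) Borel probability measures on E converging weakly to a Borel probability measure π. Let A_j ⊆ E be Borel sets with π_j(A_j) = 1 for all j, and let R ⊆ E be closed. Assume that every point of E which is the limit of a sequence (x_k) with x_k ∈ A_{j_k} for some strictly increasing sequence of indices (j_k) belongs to R (i.e., the Kuratowski upper limit of the sets A_j is contained in R). Then π(R) = 1. -/

import Mathlib

open MeasureTheory Filter Topology Metric

/-- Let `E` be a compact metric space, `π_j → π` weakly (Borel
probability measures), `A_j` Borel sets with `π_j (A_j) = 1`, and `R` closed.  If every
limit of a sequence `x_k ∈ A_{j_k}` (for a strictly increasing sequence of indices `j_k`)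
belongs to `R` (i.e. the Kuratowski upper limit of the `A_j` is contained in `R`), then
`π R = 1`. -/
theorem stmt_6 {E : Type*} [MetricSpace E] [CompactSpace E]
    [MeasurableSpace E] [BorelSpace E]
    (π : ℕ → Measure E) (πl : Measure E)
    [∀ j, IsProbabilityMeasure (π j)] [IsProbabilityMeasure πl]
    (hweak : ∀ g : E → ℝ, Continuous g → (∃ C, ∀ z, |g z| ≤ C) →
      Tendsto (fun j => ∫ z, g z ∂(π j)) atTop (𝓝 (∫ z, g z ∂πl)))
    (A : ℕ → Set E) (hAm : ∀ j, MeasurableSet (A j)) (hA1 : ∀ j, π j (A j) = 1)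
    (R : Set E) (hR : IsClosed R)
    (hK : ∀ x : E,
      (∃ j : ℕ → ℕ, StrictMono j ∧ ∃ xk : ℕ → E, (∀ k, xk k ∈ A (j k)) ∧
        Tendsto xk atTop (𝓝 x)) → x ∈ R) :
    πl R = 1 := by
  -- each `A j` is nonempty
  have hAne : ∀ j, (A j).Nonempty := by
    intro j
    rw [Set.nonempty_iff_ne_empty]
    intro h
    have h1 := hA1 j
    rw [h, measure_empty] at h1
    exact zero_ne_one h1
  -- `R` is nonempty
  have hRne : R.Nonempty := by
    choose x hx using hAne
    obtain ⟨a, -, φ, hφ, ha⟩ := isCompact_univ.tendsto_subseq (x := x) (fun n => Set.mem_univ _)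
    exact ⟨a, hK a ⟨φ, hφ, x ∘ φ, fun k => hx (φ k), ha⟩⟩
  -- eventually the `A j` lie in the `ε`-neighborhood of `R`
  have hev : ∀ ε : ℝ, 0 < ε → ∀ᶠ j in atTop, ∀ x ∈ A j, infDist x R < ε := by
    intro ε hε
    by_contra h
    rw [Filter.not_eventually] at h
    have h' : ∃ᶠ j in atTop, ∃ x ∈ A j, ε ≤ infDist x R := by
      apply h.mono
      intro j hj
      push_neg at hj
      exact hj
    obtain ⟨φ, hφ, hP⟩ := Filter.extraction_of_frequently_atTop h'
    choose x hxA hxd using hP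
    obtain ⟨a, -, ψ, hψ, ha⟩ := isCompact_univ.tendsto_subseq (x := x) (fun n => Set.mem_univ _)
    have haR : a ∈ R := hK a ⟨φ ∘ ψ, hφ.comp hψ, x ∘ ψ, fun k => hxA (ψ k), ha⟩
    have h0 : infDist a R = 0 := infDist_zero_of_mem haR
    have hεle : ε ≤ infDist a R :=
      ge_of_tendsto (((continuous_infDist_pt R).tendsto a).comp ha)
        (Filter.Eventually.of_forall fun k => hxd (ψ k))
    linarith
  -- the closed `ε`-neighborhoods of `R` have full `πl`-measure
  have hclaim : ∀ ε : ℝ, 0 < ε → πl {x | infDist x R ≤ ε} = 1 := by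
    intro ε hε
    set δ : ℝ := ε / 2 with hδdef
    have hδpos : 0 < δ := by positivity
    set S : Set E := {x | infDist x R ≤ ε} with hSdef
    have hScl : IsClosed S := isClosed_le (continuous_infDist_pt R) continuous_const
    set g : E → ℝ := fun x => max 0 (1 - max 0 (infDist x R - δ) / δ) with hgdef
    have hgc : Continuous g := by
      apply continuous_const.max
      exact continuous_const.sub
        (((continuous_const.max ((continuous_infDist_pt R).sub continuous_const)).div_const δ))
    have hg01 : ∀ x, 0 ≤ g x ∧ g x ≤ 1 := by
      intro x
      refine ⟨le_max_left _ _, max_le (by norm_num) ?_⟩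
      have h2 : 0 ≤ max 0 (infDist x R - δ) / δ := by positivity
      linarith
    have hg1 : ∀ x, infDist x R < δ → g x = 1 := by
      intro x hx
      have h2 : max 0 (infDist x R - δ) = 0 := max_eq_left (by linarith)
      simp only [hgdef, h2, zero_div, sub_zero]
      exact max_eq_right (by norm_num)
    have hg0 : ∀ x, ε < infDist x R → g x = 0 := by
      intro x hx
      apply max_eq_left
      have h1 : δ ≤ infDist x R - δ := by
        rw [hδdef] at *
        linarith
      have h2 : 1 ≤ max 0 (infDist x R - δ) / δ := by
        rw [le_div_iff₀ hδpos, one_mul]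
        exact le_trans h1 (le_max_right _ _)
      linarith
    have hgi : ∀ μ : Measure E, IsProbabilityMeasure μ → Integrable g μ := by
      intro μ _
      refine (integrable_const (1:ℝ)).mono' hgc.aestronglyMeasurable
        (Filter.Eventually.of_forall fun x => ?_)
      rw [Real.norm_eq_abs, abs_of_nonneg (hg01 x).1]
      exact (hg01 x).2
    have hev1 : ∀ᶠ j in atTop, (1:ℝ) ≤ ∫ z, g z ∂(π j) := by
      filter_upwards [hev δ hδpos] with j hj
      have h1 : (1:ℝ) = ∫ z, (A j).indicator (fun _ => (1:ℝ)) z ∂(π j) := by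
        rw [integral_indicator (hAm j)]
        simp [Measure.real, hA1 j]
      rw [h1]
      apply integral_mono ((integrable_const 1).indicator (hAm j)) (hgi _ inferInstance)
      intro x
      by_cases hx : x ∈ A j
      · rw [Set.indicator_of_mem hx]
        exact le_of_eq (hg1 x (hj x hx)).symm
      · rw [Set.indicator_of_notMem hx]
        exact (hg01 x).1
    have hlim : (1:ℝ) ≤ ∫ z, g z ∂πl :=
      ge_of_tendsto (hweak g hgc ⟨1, fun z => by
        rw [abs_of_nonneg (hg01 z).1]; exact (hg01 z).2⟩) hev1
    have hupper : ∫ z, g z ∂πl ≤ (πl S).toReal := by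
      have h1 : ∫ z, g z ∂πl ≤ ∫ z, S.indicator (fun _ => (1:ℝ)) z ∂πl := by
        apply integral_mono (hgi πl inferInstance)
          ((integrable_const 1).indicator hScl.measurableSet)
        intro x
        by_cases hx : x ∈ S
        · rw [Set.indicator_of_mem hx]
          exact (hg01 x).2
        · rw [Set.indicator_of_notMem hx]
          exact le_of_eq (hg0 x (not_le.mp hx))
      rw [integral_indicator hScl.measurableSet] at h1
      simpa [Measure.real] using h1
    have hone : (πl S).toReal = 1 := by
      have hle : (πl S).toReal ≤ 1 := by
        have := prob_le_one (μ := πl) (s := S)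
        simpa using ENNReal.toReal_mono ENNReal.one_ne_top this
      linarith
    have hfin : πl S ≠ ⊤ := measure_ne_top _ _
    rw [← ENNReal.ofReal_toReal hfin, hone]
    simp
  -- conclude
  have hcompl : πl Rᶜ = 0 := by
    have hsub : Rᶜ ⊆ ⋃ n : ℕ, {x | infDist x R ≤ 1/(n+1)}ᶜ := by
      intro x hx
      have hpos : 0 < infDist x R := by
        rcases (IsClosed.mem_iff_infDist_zero hR hRne).not.mp hx with h
        have h0 := infDist_nonneg (x := x) (s := R)
        cases lt_or_eq_of_le h0 with
        | inl h' => exact h'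
        | inr h' => exact absurd h'.symm h
      obtain ⟨n, hn⟩ := exists_nat_one_div_lt hpos
      exact Set.mem_iUnion.mpr ⟨n, by simpa using not_le.mpr hn⟩
    have hnull : ∀ n : ℕ, πl {x | infDist x R ≤ 1/(n+1)}ᶜ = 0 := by
      intro n
      have hcl : IsClosed {x : E | infDist x R ≤ 1/(n+1)} :=
        isClosed_le (continuous_infDist_pt R) continuous_const
      rw [prob_compl_eq_zero_iff hcl.measurableSet]
      apply hclaim
      positivity
    exact measure_mono_null hsub (measure_iUnion_null hnull)
  exact (prob_compl_eq_zero_iff hR.measurableSet).mp hcompl
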